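/- Let M = [a,b) and N = [c,d) be interval modules (0 ≤ a < b, 0 ≤ c < d) with m₁ > m₂, and set E = max{|a−d|, |b−c|}. Then m₂ < m₁ < E and: (a) for every ε with m₂ ≤ ε < m₁, all four spaces Hom(M, N·ε), Hom(N, M·ε), Hom(M, M·2ε), Hom(N, N·2ε) are zero; (b) for every ε with m₁ ≤ ε < E, exactly one of Hom(M, N·ε), Hom(N, M·ε) is nonzero, and Hom(M, M·2ε) = Hom(N, N·2ε) = 0; (c) for every ε ≥ E, all four spaces are zero. (This expresses that for interval modules the progression of varieties of ε-interleavings in the case m₁ > m₂ is: origin, coordinate axis, origin.) -/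

import Mathlib

open scoped NNReal

/-- A persistence module: a functor from `[0,∞)` to real vector spaces. -/
structure PM where
  V : ℝ≥0 → Type
  [grp : ∀ x, AddCommGroup (V x)]
  [mod : ∀ x, Module ℝ (V x)]
  map : ∀ {x y : ℝ≥0}, x ≤ y → (V x →ₗ[ℝ] V y)
  map_id : ∀ x : ℝ≥0, map (le_refl x) = LinearMap.id
  map_comp : ∀ {x y z : ℝ≥0} (h1 : x ≤ y) (h2 : y ≤ z),
    (map h2).comp (map h1) = map (h1.trans h2)

attribute [instance] PM.grp PM.mod

/-- A morphism of persistence modules. -/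
structure PM.Hom (M N : PM) where
  app : ∀ x : ℝ≥0, M.V x →ₗ[ℝ] N.V x
  comm : ∀ {x y : ℝ≥0} (h : x ≤ y), (app y).comp (M.map h) = (N.map h).comp (app x)

/-- The shifted module `M·ε`. -/
def PM.shift (M : PM) (ε : ℝ≥0) : PM where
  V x := M.V (x + ε)
  grp x := inferInstance
  mod x := inferInstance
  map h := M.map (add_le_add h (le_refl ε))
  map_id x := M.map_id (x + ε)
  map_comp h1 h2 := M.map_comp _ _

noncomputable def intervalSub (α β : ℝ) (x : ℝ≥0) : Submodule ℝ ℝ :=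
  if α ≤ (x : ℝ) ∧ (x : ℝ) < β then ⊤ else ⊥

/-- The interval module `[α,β)`. -/
noncomputable def intervalModule (α β : ℝ) : PM where
  V x := ↥(intervalSub α β x)
  grp x := inferInstance
  mod x := inferInstance
  map {x y} h := LinearMap.codRestrict _
      ((if α ≤ (x : ℝ) ∧ (y : ℝ) < β then (1 : ℝ) else 0) • (intervalSub α β x).subtype)
      (by
        intro v
        by_cases hy : α ≤ (y : ℝ) ∧ (y : ℝ) < β
        · simp [intervalSub, hy]
        · have hc : ¬(α ≤ (x : ℝ) ∧ (y : ℝ) < β) := by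
            intro hc
            exact hy ⟨le_trans hc.1 (by exact_mod_cast h), hc.2⟩
          rw [if_neg hc, zero_smul]
          simp [intervalSub, hy]
          rfl)
  map_id x := by
    ext v
    by_cases hx : α ≤ (x : ℝ) ∧ (x : ℝ) < β
    · simp [hx]
    · have hv : (v : ℝ) = 0 := by
        have h2 := v.2
        simp only [intervalSub, if_neg hx, Submodule.mem_bot] at h2
        exact h2
      simp [hx, hv]
  map_comp {x y z} h1 h2 := by
    ext v
    by_cases hC : α ≤ (x : ℝ) ∧ (z : ℝ) < β
    · have hA : α ≤ (x : ℝ) ∧ (y : ℝ) < β :=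
        ⟨hC.1, lt_of_le_of_lt (by exact_mod_cast h2) hC.2⟩
      have hB : α ≤ (y : ℝ) ∧ (z : ℝ) < β :=
        ⟨le_trans hC.1 (by exact_mod_cast h1), hC.2⟩
      simp [hA, hB, hC]
    · rcases not_and_or.mp hC with hx | hz
      · have hA : ¬(α ≤ (x : ℝ) ∧ (y : ℝ) < β) := fun h => hx h.1
        simp [hA, hC]
        split_ifs <;> simp
      · have hB : ¬(α ≤ (y : ℝ) ∧ (z : ℝ) < β) := fun h => hz h.2
        simp [hB, hC]

/-- `Hom(M,N) ≠ {0}`: there is a nonzero morphism from `M` to `N`. -/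
def HomNeZero (M N : PM) : Prop := ∃ F : PM.Hom M N, ∃ x, F.app x ≠ 0

/-- `S_{M,N} = {x ≥ 0 : Hom(M, N·x) ≠ {0}}`. -/
noncomputable def Sset (M N : PM) : Set ℝ :=
  {x : ℝ | 0 ≤ x ∧ HomNeZero M (N.shift x.toNNReal)}

/-- The canonical morphism `Π_M^{M·τ} : M → M·τ`. -/
def PM.pi (M : PM) (τ : ℝ≥0) : M.Hom (M.shift τ) where
  app x := M.map le_self_add
  comm {x y} h := by
    show (M.map le_self_add).comp (M.map h) =
      (M.map (add_le_add h (le_refl τ))).comp (M.map le_self_add)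
    rw [M.map_comp, M.map_comp]

/-- The pair `(Φ, Ψ)` is an `ε`-interleaving between `M` and `N`:
`(Ψ·ε) ∘ Φ = Π_M^{M·2ε}` and `(Φ·ε) ∘ Ψ = Π_N^{N·2ε}` (expressed pointwise). -/
def IsInterleaving (M N : PM) (ε : ℝ≥0)
    (Φ : M.Hom (N.shift ε)) (Ψ : N.Hom (M.shift ε)) : Prop :=
  (∀ x : ℝ≥0, (Ψ.app (x + ε)).comp (Φ.app x) =
      M.map (le_self_add.trans le_self_add : x ≤ x + ε + ε)) ∧
  (∀ x : ℝ≥0, (Φ.app (x + ε)).comp (Ψ.app x) =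
      N.map (le_self_add.trans le_self_add : x ≤ x + ε + ε))

noncomputable def vval {α β : ℝ} {x : ℝ≥0} (v : (intervalModule α β).V x) : ℝ :=
  (show ↥(intervalSub α β x) from v).1

lemma intervalModule_map_vval (α β : ℝ) {x y : ℝ≥0} (h : x ≤ y) (v : (intervalModule α β).V x) :
    vval ((intervalModule α β).map h v) =
      (if α ≤ (x:ℝ) ∧ (y:ℝ) < β then (1:ℝ) else 0) * vval v := rfl

lemma vval_eq_zero {α β : ℝ} {x : ℝ≥0} (h : ¬(α ≤ (x:ℝ) ∧ (x:ℝ) < β))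
    (v : (intervalModule α β).V x) : vval v = 0 := by
  have h2 := (show ↥(intervalSub α β x) from v).2
  simp only [intervalSub, if_neg h, Submodule.mem_bot] at h2
  exact h2 ▸ rfl

lemma eq_zero_of_vval {α β : ℝ} {x : ℝ≥0} (v : (intervalModule α β).V x)
    (h : vval v = 0) : v = 0 := Subtype.ext h

lemma vval_zero {α β : ℝ} {x : ℝ≥0} : vval (0 : (intervalModule α β).V x) = 0 := rfl

lemma homNeZero_iff (a b c d : ℝ) (ha : 0 ≤ a) (hab : a < b) (hc : 0 ≤ c) (hcd : c < d)
    (τ : ℝ≥0) :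
    HomNeZero (intervalModule a b) ((intervalModule c d).shift τ) ↔
      (c ≤ a + τ ∧ a + (τ:ℝ) < d ∧ d ≤ b + τ) := by
  constructor
  · rintro ⟨F, x, hFx⟩
    -- source is nonzero at x
    by_cases hsx : a ≤ (x:ℝ) ∧ (x:ℝ) < b
    swap
    · exact absurd (LinearMap.ext fun v => by
        rw [eq_zero_of_vval v (vval_eq_zero hsx v)]; simp) hFx
    obtain ⟨v, hv⟩ : ∃ v, F.app x v ≠ 0 := by
      by_contra h; push_neg at h; exact hFx (LinearMap.ext h)
    -- target is nonzero at x
    have htx : c ≤ ((x:ℝ) + τ) ∧ ((x:ℝ) + τ) < d := by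
      by_contra htx
      have htx' : ¬ (c ≤ ((x + τ : ℝ≥0):ℝ) ∧ ((x + τ : ℝ≥0):ℝ) < d) := by
        push_cast; exact htx
      exact hv (eq_zero_of_vval _ (vval_eq_zero htx' _))
    set aN : ℝ≥0 := a.toNNReal with haNdef
    have haN : (aN:ℝ) = a := Real.coe_toNNReal a ha
    have h1 : aN ≤ x := by
      rw [← NNReal.coe_le_coe, haN]; exact hsx.1
    have hkey : c ≤ a + (τ:ℝ) ∧ a + (τ:ℝ) < d := by
      by_contra hcon
      have hbot : ¬ (c ≤ ((aN + τ : ℝ≥0):ℝ) ∧ ((aN + τ : ℝ≥0):ℝ) < d) := by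
        push_cast [haN]; exact hcon
      -- the element of V aN with value = vval v
      have hmem : vval v ∈ intervalSub a b aN := by
        simp only [intervalSub, if_pos (show a ≤ (aN:ℝ) ∧ (aN:ℝ) < b by
          rw [haN]; exact ⟨le_refl a, hab⟩)]
        trivial
      set w : (intervalModule a b).V aN := ⟨vval v, hmem⟩ with hwdef
      have hMw : (intervalModule a b).map h1 w = v := by
        apply Subtype.ext
        show vval ((intervalModule a b).map h1 w) = vval v
        rw [intervalModule_map_vval, if_pos ⟨by rw [haN], hsx.2⟩, one_mul]
        rfl
      have h0 : F.app aN w = 0 := eq_zero_of_vval _ (vval_eq_zero hbot _)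
      have hcm := LinearMap.congr_fun (F.comm h1) w
      simp only [LinearMap.comp_apply, hMw, h0, map_zero] at hcm
      exact hv hcm
    refine ⟨hkey.1, hkey.2, ?_⟩
    by_contra hcon
    push_neg at hcon
    set y : ℝ≥0 := b.toNNReal ⊔ x with hydef
    have hby : b ≤ (y:ℝ) := by
      rw [hydef]; push_cast
      exact le_trans (le_of_eq (Real.coe_toNNReal b (le_of_lt (lt_of_le_of_lt ha hab))).symm)
        (le_max_left _ _)
    have hxy : x ≤ y := le_sup_right
    have hyd : (y:ℝ) + τ < d := by
      have hcoe : (y:ℝ) = max ((b.toNNReal : ℝ≥0):ℝ) ((x:ℝ≥0):ℝ) := by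
        rw [hydef]; exact_mod_cast rfl
      rw [hcoe, Real.coe_toNNReal b (le_of_lt (lt_of_le_of_lt ha hab))]
      rcases max_cases b ((x:ℝ≥0):ℝ) with ⟨h,_⟩|⟨h,_⟩ <;> rw [h] <;> linarith [htx.2]
    have hM0 : (intervalModule a b).map hxy v = 0 := by
      apply eq_zero_of_vval
      rw [intervalModule_map_vval, if_neg (fun h => absurd hby (not_le.mpr h.2)), zero_mul]
    have hcm := LinearMap.congr_fun (F.comm hxy) v
    simp only [LinearMap.comp_apply, hM0, map_zero] at hcm
    -- RHS : shifted N map applied to F.app x v equals 0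
    have hval : vval (F.app x v) ≠ 0 := fun h => hv (eq_zero_of_vval _ h)
    apply hval
    have := congrArg vval hcm.symm
    erw [vval_zero] at this
    rw [show ((intervalModule c d).shift τ).map hxy (F.app x v)
        = (intervalModule c d).map (add_le_add hxy (le_refl τ)) (F.app x v) from rfl] at this
    erw [intervalModule_map_vval, if_pos (by push_cast; exact ⟨htx.1, hyd⟩), one_mul] at this
    exact this
  · rintro ⟨h1, h2, h3⟩
    refine ⟨⟨fun x => LinearMap.codRestrict _
        ((if a ≤ (x:ℝ) ∧ (x:ℝ) + τ < d then (1:ℝ) else 0) • (intervalSub a b x).subtype) ?_,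
        ?_⟩, a.toNNReal, ?_⟩
    · intro v
      by_cases ht : c ≤ ((x + τ : ℝ≥0):ℝ) ∧ ((x + τ : ℝ≥0):ℝ) < d
      · rw [intervalSub, if_pos ht]; trivial
      · have hsc : ¬ (a ≤ (x:ℝ) ∧ (x:ℝ) + τ < d) := by
          intro hco
          exact ht (by push_cast; exact ⟨le_trans h1 (by linarith [hco.1]), hco.2⟩)
        rw [intervalSub, if_neg ht, if_neg hsc]
        simp
        rfl
    · intro x y hxy
      ext v
      apply Subtype.ext
      show (if a ≤ (y:ℝ) ∧ (y:ℝ) + τ < d then (1:ℝ) else 0) *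
          ((if a ≤ (x:ℝ) ∧ (y:ℝ) < b then (1:ℝ) else 0) * vval v) =
        (if c ≤ ((x + τ : ℝ≥0):ℝ) ∧ ((y + τ : ℝ≥0):ℝ) < d then (1:ℝ) else 0) *
          ((if a ≤ (x:ℝ) ∧ (x:ℝ) + τ < d then (1:ℝ) else 0) * vval v)
      by_cases hsx : a ≤ (x:ℝ) ∧ (x:ℝ) < b
      swap
      · rw [vval_eq_zero hsx v]; ring
      by_cases hyd : (y:ℝ) + τ < d
      · have hA : a ≤ (y:ℝ) ∧ (y:ℝ) + τ < d :=
          ⟨le_trans hsx.1 (NNReal.coe_le_coe.mpr hxy), hyd⟩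
        have hB : a ≤ (x:ℝ) ∧ (y:ℝ) < b := ⟨hsx.1, by linarith⟩
        have hC : c ≤ ((x + τ : ℝ≥0):ℝ) ∧ ((y + τ : ℝ≥0):ℝ) < d := by
          push_cast; exact ⟨by linarith [hsx.1], hyd⟩
        have hD : a ≤ (x:ℝ) ∧ (x:ℝ) + τ < d :=
          ⟨hsx.1, by have := NNReal.coe_le_coe.mpr hxy; linarith⟩
        rw [if_pos hA, if_pos hB, if_pos hC, if_pos hD]
      · have hA : ¬ (a ≤ (y:ℝ) ∧ (y:ℝ) + τ < d) := fun h => hyd h.2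
        have hC : ¬ (c ≤ ((x + τ : ℝ≥0):ℝ) ∧ ((y + τ : ℝ≥0):ℝ) < d) := by
          push_cast; exact fun h => hyd h.2
        rw [if_neg hA, if_neg hC]; ring
    · intro hzero
      have haN : ((a.toNNReal:ℝ≥0):ℝ) = a := Real.coe_toNNReal a ha
      have hmem : (1:ℝ) ∈ intervalSub a b a.toNNReal := by
        simp only [intervalSub, if_pos (show a ≤ ((a.toNNReal:ℝ≥0):ℝ) ∧ ((a.toNNReal:ℝ≥0):ℝ) < b by
          rw [haN]; exact ⟨le_refl a, hab⟩)]
        trivial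
      have := LinearMap.congr_fun hzero ⟨1, hmem⟩
      erw [LinearMap.zero_apply] at this
      have hcoe : (if a ≤ ((a.toNNReal:ℝ≥0):ℝ) ∧ ((a.toNNReal:ℝ≥0):ℝ) + (τ:ℝ) < d
          then (1:ℝ) else 0) * 1 = 0 := congrArg vval this
      rw [if_pos (by rw [haN]; exact ⟨le_refl a, h2⟩), one_mul] at hcoe
      exact one_ne_zero hcoe

lemma homNeZero_iff' (a b c d : ℝ) (ha : 0 ≤ a) (hab : a < b) (hc : 0 ≤ c) (hcd : c < d)
    (ε : ℝ) (hε : 0 ≤ ε) :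
    HomNeZero (intervalModule a b) ((intervalModule c d).shift ε.toNNReal) ↔
      (c ≤ a + ε ∧ a + ε < d ∧ d ≤ b + ε) := by
  rw [homNeZero_iff a b c d ha hab hc hcd, Real.coe_toNNReal ε hε]

theorem stmt0 (a b c d : ℝ) (ha : 0 ≤ a) (hab : a < b) (hc : 0 ≤ c) (hcd : c < d)
    (m₁ m₂ E : ℝ)
    (hm1 : m₁ = max |a - c| |b - d|) (hm2 : m₂ = max ((b - a) / 2) ((d - c) / 2))
    (hE : E = max |a - d| |b - c|) (hm : m₁ > m₂) :
    m₂ < m₁ ∧ m₁ < E ∧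
    (∀ ε : ℝ, m₂ ≤ ε → ε < m₁ →
      ¬ HomNeZero (intervalModule a b) ((intervalModule c d).shift (ε).toNNReal) ∧ ¬ HomNeZero (intervalModule c d) ((intervalModule a b).shift (ε).toNNReal) ∧
      ¬ HomNeZero (intervalModule a b) ((intervalModule a b).shift (2*ε).toNNReal) ∧ ¬ HomNeZero (intervalModule c d) ((intervalModule c d).shift (2*ε).toNNReal)) ∧
    (∀ ε : ℝ, m₁ ≤ ε → ε < E →
      Xor' (HomNeZero (intervalModule a b) ((intervalModule c d).shift (ε).toNNReal)) (HomNeZero (intervalModule c d) ((intervalModule a b).shift (ε).toNNReal)) ∧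
      ¬ HomNeZero (intervalModule a b) ((intervalModule a b).shift (2*ε).toNNReal) ∧ ¬ HomNeZero (intervalModule c d) ((intervalModule c d).shift (2*ε).toNNReal)) ∧
    (∀ ε : ℝ, E ≤ ε →
      ¬ HomNeZero (intervalModule a b) ((intervalModule c d).shift (ε).toNNReal) ∧ ¬ HomNeZero (intervalModule c d) ((intervalModule a b).shift (ε).toNNReal) ∧
      ¬ HomNeZero (intervalModule a b) ((intervalModule a b).shift (2*ε).toNNReal) ∧ ¬ HomNeZero (intervalModule c d) ((intervalModule c d).shift (2*ε).toNNReal)) := by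
  have hm2a : (b - a) / 2 ≤ m₂ := hm2 ▸ le_max_left _ _
  have hm2b : (d - c) / 2 ≤ m₂ := hm2 ▸ le_max_right _ _
  have hm2pos : 0 < m₂ := lt_of_lt_of_le (by linarith) hm2a
  have habs1 : a - c ≤ |a - c| := le_abs_self _
  have habs1' : c - a ≤ |a - c| := by rw [abs_sub_comm]; exact le_abs_self _
  have habs2 : b - d ≤ |b - d| := le_abs_self _
  have habs2' : d - b ≤ |b - d| := by rw [abs_sub_comm]; exact le_abs_self _
  have hM1a : c - a ≤ m₁ := le_trans habs1' (hm1 ▸ le_max_left _ _)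
  have hM1b : a - c ≤ m₁ := le_trans habs1 (hm1 ▸ le_max_left _ _)
  have hM1c : d - b ≤ m₁ := le_trans habs2' (hm1 ▸ le_max_right _ _)
  have hM1d : b - d ≤ m₁ := le_trans habs2 (hm1 ▸ le_max_right _ _)
  -- E = max (d - a) (b - c)
  have hEeq : E = max (d - a) (b - c) := by
    rw [hE]
    rcases abs_cases (a - d) with ⟨h3, h3'⟩ | ⟨h3, h3'⟩ <;>
      rcases abs_cases (b - c) with ⟨h4, h4'⟩ | ⟨h4, h4'⟩ <;>
      rw [h3, h4] <;>
      rcases max_cases (a - d) (b - c) with ⟨h5, h5'⟩ | ⟨h5, h5'⟩ <;>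
      rcases max_cases (d - a) (b - c) with ⟨h6, h6'⟩ | ⟨h6, h6'⟩ <;>
      first
        | linarith
        | (rcases max_cases (a - d) (-(b - c)) with ⟨h7, h7'⟩ | ⟨h7, h7'⟩ <;>
            rw [h7] <;> linarith)
        | (rcases max_cases (-(a - d)) (-(b - c)) with ⟨h7, h7'⟩ | ⟨h7, h7'⟩ <;>
            rw [h7] <;> linarith)
        | (rcases max_cases (-(a - d)) (b - c) with ⟨h7, h7'⟩ | ⟨h7, h7'⟩ <;>
            rw [h7] <;> linarith)
  have hm1E : m₁ < E := by
    rw [hEeq]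
    rw [hm1]
    rcases max_cases |a - c| |b - d| with ⟨h5, h5'⟩ | ⟨h5, h5'⟩ <;> rw [h5] <;>
      [rcases abs_cases (a - c) with ⟨h6, _⟩ | ⟨h6, _⟩;
       rcases abs_cases (b - d) with ⟨h6, _⟩ | ⟨h6, _⟩] <;>
      rw [h6] <;> rw [lt_max_iff] <;> [right; left; right; left] <;> linarith
  have hminle : min (d - a) (b - c) ≤ m₁ := by
    rw [hm1]
    rcases max_cases |a - c| |b - d| with ⟨h5, h5'⟩ | ⟨h5, h5'⟩ <;> rw [h5] <;>
      [rcases abs_cases (a - c) with ⟨h6, h6'⟩ | ⟨h6, h6'⟩;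
       rcases abs_cases (b - d) with ⟨h6, h6'⟩ | ⟨h6, h6'⟩] <;> rw [h6]
    · exact le_trans (min_le_left _ _) (by rw [hm1, h5, h6] at hm; linarith)
    · exact le_trans (min_le_right _ _) (by rw [hm1, h5, h6] at hm; linarith)
    · exact le_trans (min_le_left _ _) (by rw [hm1, h5, h6] at hm; linarith)
    · exact le_trans (min_le_right _ _) (by rw [hm1, h5, h6] at hm; linarith)
  have hdaE : d - a ≤ E := hEeq ▸ le_max_left _ _
  have hbcE : b - c ≤ E := hEeq ▸ le_max_right _ _
  refine ⟨hm, hm1E, ?_, ?_, ?_⟩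
  · -- part (a)
    intro ε hε1 hε2
    have hε0 : 0 ≤ ε := le_trans hm2pos.le hε1
    have hε0' : 0 ≤ 2 * ε := by linarith
    rw [homNeZero_iff' a b c d ha hab hc hcd ε hε0,
      homNeZero_iff' c d a b hc hcd ha hab ε hε0,
      homNeZero_iff' a b a b ha hab ha hab (2*ε) hε0',
      homNeZero_iff' c d c d hc hcd hc hcd (2*ε) hε0']
    have hlt : ε < |a - c| ∨ ε < |b - d| := by
      rw [hm1] at hε2; exact lt_max_iff.mp hε2
    refine ⟨?_, ?_, ?_, ?_⟩
    · rintro ⟨H1, H2, H3⟩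
      rcases hlt with h | h <;> rcases abs_cases (a - c) with ⟨h6, h6'⟩ | ⟨h6, h6'⟩ <;>
        rcases abs_cases (b - d) with ⟨h7, h7'⟩ | ⟨h7, h7'⟩ <;>
        (first | rw [h6] at h | rw [h7] at h)
      all_goals linarith
    · rintro ⟨H1, H2, H3⟩
      rcases hlt with h | h <;> rcases abs_cases (a - c) with ⟨h6, h6'⟩ | ⟨h6, h6'⟩ <;>
        rcases abs_cases (b - d) with ⟨h7, h7'⟩ | ⟨h7, h7'⟩ <;>
        (first | rw [h6] at h | rw [h7] at h)
      all_goals linarith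
    · rintro ⟨H1, H2, H3⟩; linarith
    · rintro ⟨H1, H2, H3⟩; linarith
  · -- part (b)
    intro ε hε1 hε2
    have hε0 : 0 ≤ ε := le_trans (by linarith) hε1
    have hε0' : 0 ≤ 2 * ε := by linarith
    rw [homNeZero_iff' a b c d ha hab hc hcd ε hε0,
      homNeZero_iff' c d a b hc hcd ha hab ε hε0,
      homNeZero_iff' a b a b ha hab ha hab (2*ε) hε0',
      homNeZero_iff' c d c d hc hcd hc hcd (2*ε) hε0']
    have hEmax : ε < max (d - a) (b - c) := hEeq ▸ hε2
    refine ⟨?_, fun ⟨H1, H2, H3⟩ => by linarith, fun ⟨H1, H2, H3⟩ => by linarith⟩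
    rcases le_total (d - a) (b - c) with hcase | hcase
    · have hda : d - a ≤ ε := le_trans (by rw [min_eq_left hcase] at hminle; exact hminle) hε1
      have hbc : ε < b - c := by rw [max_eq_right hcase] at hEmax; exact hEmax
      exact Or.inr ⟨⟨by linarith, by linarith, by linarith⟩,
        fun ⟨H1, H2, H3⟩ => by linarith⟩
    · have hbc : b - c ≤ ε := le_trans (by rw [min_eq_right hcase] at hminle; exact hminle) hε1
      have hda : ε < d - a := by rw [max_eq_left hcase] at hEmax; exact hEmax
      exact Or.inl ⟨⟨by linarith, by linarith, by linarith⟩,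
        fun ⟨H1, H2, H3⟩ => by linarith⟩
  · -- part (c)
    intro ε hε1
    have hε0 : 0 ≤ ε := le_trans (by linarith) hε1
    have hε0' : 0 ≤ 2 * ε := by linarith
    rw [homNeZero_iff' a b c d ha hab hc hcd ε hε0,
      homNeZero_iff' c d a b hc hcd ha hab ε hε0,
      homNeZero_iff' a b a b ha hab ha hab (2*ε) hε0',
      homNeZero_iff' c d c d hc hcd hc hcd (2*ε) hε0']
    exact ⟨fun ⟨H1, H2, H3⟩ => by linarith, fun ⟨H1, H2, H3⟩ => by linarith,
      fun ⟨H1, H2, H3⟩ => by linarith, fun ⟨H1, H2, H3⟩ => by linarith⟩
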